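/- Let G_0 = G and let W_1, …, W_r be such that each W_t is a clique of G_{t−1} and G_t = G_{t−1}|W_t. Define F_0 = STAB(G) and F_t = {x ∈ STAB(G) : x_{W_j} = 1 for j = 1,…,t}. Then F_t ⊆ STAB(G_t) for every t ∈ {0,…,r}. -/

import Mathlib

open Finset

variable {V : Type*}

/-- A stable (independent) set of a graph: pairwise non-adjacent vertices. -/
def IsStable (G : SimpleGraph V) (S : Finset V) : Prop :=
  ∀ u ∈ S, ∀ v ∈ S, ¬ G.Adj u v

/-- The characteristic vectors of stable sets of `G`. -/
def stableVecs [DecidableEq V] (G : SimpleGraph V) : Set (V → ℝ) :=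
  {x | ∃ S : Finset V, IsStable G S ∧ x = fun v => if v ∈ S then (1 : ℝ) else 0}

/-- The stable set polytope `STAB(G)`. -/
def STAB [DecidableEq V] (G : SimpleGraph V) : Set (V → ℝ) :=
  convexHull ℝ (stableVecs G)

/-- `x_W = ∑_{v ∈ W} x_v`. -/
def vsum (W : Finset V) (x : V → ℝ) : ℝ := ∑ v ∈ W, x v

/-- The clique projection `G|W`: add every non-edge `uv` with `W ⊆ N(u) ∪ N(v)`. -/
def cliqueProj (G : SimpleGraph V) (W : Finset V) : SimpleGraph V where
  Adj u v := G.Adj u v ∨ (u ≠ v ∧ ¬G.Adj u v ∧ ∀ w ∈ W, G.Adj w u ∨ G.Adj w v)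
  symm := ⟨by
    rintro u v (h | ⟨hne, hna, h⟩)
    · exact Or.inl h.symm
    · exact Or.inr ⟨hne.symm, fun h' => hna h'.symm, fun w hw => (h w hw).symm⟩⟩
  loopless := ⟨by
    rintro u (h | ⟨hne, _, _⟩)
    · exact G.loopless.irrefl u h
    · exact hne rfl⟩

/-- Iterated projected graphs: `G_0 = G`, `G_t = G_{t-1} | W_t`. -/
def projSeq (G : SimpleGraph V) (W : ℕ → Finset V) : ℕ → SimpleGraph V
  | 0 => G
  | t + 1 => cliqueProj (projSeq G W t) (W (t + 1))

/-- `F_t = {x ∈ STAB(G) : x_{W_j} = 1, j = 1, …, t}`. -/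
def Fface [DecidableEq V] (G : SimpleGraph V) (W : ℕ → Finset V) (t : ℕ) : Set (V → ℝ) :=
  {x ∈ STAB G | ∀ j ∈ Finset.Icc 1 t, vsum (W j) x = 1}

/-- `α(G[H], c)`: the maximum `c`-weight of a stable set of `G` contained in `H`. -/
noncomputable def alphaW (G : SimpleGraph V) (H : Finset V) (c : V → ℝ) : ℝ :=
  sSup {r : ℝ | ∃ S : Finset V, S ⊆ H ∧ IsStable G S ∧ r = ∑ v ∈ S, c v}

/-- `α(G[H])`: the maximum cardinality of a stable set of `G` contained in `H`. -/
noncomputable def alphaOn (G : SimpleGraph V) (H : Finset V) : ℕ :=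
  sSup {k : ℕ | ∃ S : Finset V, S ⊆ H ∧ IsStable G S ∧ S.card = k}

/-- The stability number `α(G)`. -/
noncomputable def alphaNum [Fintype V] (G : SimpleGraph V) : ℕ :=
  sSup {k : ℕ | ∃ S : Finset V, IsStable G S ∧ S.card = k}

/-- `cᵀx`. -/
def dotp [Fintype V] (c x : V → ℝ) : ℝ := ∑ v, c v * x v

/-- The affine dimension of a set of points. -/
noncomputable def affDim (s : Set (V → ℝ)) : ℕ := Module.finrank ℝ (vectorSpan ℝ s)

/-- Strong hypertree (with hyperedges of size `k`). -/
inductive IsStrongHypertree [DecidableEq V] (k : ℕ) : Finset V → Finset (Finset V) → Prop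
  | base (V' : Finset V) : IsStrongHypertree k V' {V'}
  | step (V' : Finset V) (E : Finset (Finset V)) (v : V) (Wi : Finset V) :
      v ∈ V' → v ∈ Wi → Wi ∈ E →
      (∃ Wj ∈ E, Wj ≠ Wi ∧ (Wi ∩ Wj).card = k - 1) →
      IsStrongHypertree k (V'.erase v) (E.erase Wi) →
      IsStrongHypertree k V' E

/-- Condition (I): `|W_t| = k` and the subgraph of `G_{t-1}` induced by `W_1 ∪ ⋯ ∪ W_t`
is `k`-partite with stable vertex classes `V_t^1, …, V_t^k`. -/
def CondI [DecidableEq V] (G : SimpleGraph V) (W : ℕ → Finset V)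
    (Vc : ℕ → ℕ → Finset V) (k t : ℕ) : Prop :=
  (W t).card = k ∧
  (Finset.Icc 1 k).biUnion (Vc t) = (Finset.Icc 1 t).biUnion W ∧
  (∀ i ∈ Finset.Icc 1 k, ∀ j ∈ Finset.Icc 1 k, i ≠ j → Disjoint (Vc t i) (Vc t j)) ∧
  (∀ i ∈ Finset.Icc 1 k, ∀ u ∈ Vc t i, ∀ v ∈ Vc t i, ¬(projSeq G W (t - 1)).Adj u v)

/-- Condition (II): `T_t = (V_t, {W_1, …, W_t})` is a strong hypertree. -/
def CondII [DecidableEq V] (W : ℕ → Finset V) (Vc : ℕ → ℕ → Finset V) (k t : ℕ) : Prop :=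
  IsStrongHypertree k ((Finset.Icc 1 k).biUnion (Vc t)) ((Finset.Icc 1 t).image W)

/-- Condition (III): every `w ∉ V_t` misses some class `V_t^i` in `G_{t-1}`. -/
def CondIII [DecidableEq V] (G : SimpleGraph V) (W : ℕ → Finset V)
    (Vc : ℕ → ℕ → Finset V) (k t : ℕ) : Prop :=
  ∀ w : V, w ∉ (Finset.Icc 1 k).biUnion (Vc t) →
    ∃ i ∈ Finset.Icc 1 k, ∀ u ∈ Vc t i, ¬(projSeq G W (t - 1)).Adj w u

/-- Condition (IV). -/
def CondIV [Fintype V] [DecidableEq V] (G : SimpleGraph V) (W : ℕ → Finset V)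
    (Vc : ℕ → ℕ → Finset V) (k r : ℕ) : Prop :=
  ∀ i ∈ Finset.Icc 1 (k - 1), ∀ t ∈ Finset.Icc 1 r, ∀ v ∈ W t ∩ Vc t i,
    ∀ w ∈ Finset.univ \ (Finset.Icc 1 k).biUnion (Vc r),
      (∃ z ∈ Vc r i, (projSeq G W r).Adj z w) →
      (G.Adj v w ∨ ∃ t' ∈ Finset.Icc 1 r,
        (projSeq G W (t' - 1)).IsClique (W t : Set V) ∧
        W t ≠ W t' ∧ (W t ∩ W t').card = k - 1 ∧
        v ∉ W t' ∧ ∃ v' ∈ W t' ∩ Vc r i, (projSeq G W (t' - 1)).Adj v' w)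

/-- Condition (V): no vertex of `V_t^k` has a neighbor in `V_r^0` in the graph `G_r`. -/
def CondV [Fintype V] [DecidableEq V] (G : SimpleGraph V) (W : ℕ → Finset V)
    (Vc : ℕ → ℕ → Finset V) (k r t : ℕ) : Prop :=
  ∀ v ∈ Vc t k, ∀ w ∈ Finset.univ \ (Finset.Icc 1 k).biUnion (Vc r),
    ¬(projSeq G W r).Adj v w

/-- `STAB(G[H])`, embedded in `ℝ^V` (coordinates outside `H` are zero). -/
def STABon [DecidableEq V] (G : SimpleGraph V) (H : Finset V) : Set (V → ℝ) :=
  convexHull ℝ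
    {x | ∃ S : Finset V, S ⊆ H ∧ IsStable G S ∧ x = fun v => if v ∈ S then (1 : ℝ) else 0}

lemma stable_cliqueProj {V : Type*} [DecidableEq V] {H : SimpleGraph V} {W S : Finset V}
    (hS : IsStable H S) (hw : ∃ w ∈ W, w ∈ S) : IsStable (cliqueProj H W) S := by
  rintro u hu v hv (h | ⟨hne, hna, h⟩)
  · exact hS u hu v hv h
  · obtain ⟨w, hwW, hwS⟩ := hw
    rcases h w hwW with h' | h'
    · exact hS w hwS u hu h'
    · exact hS w hwS v hv h'

lemma vsum_char {V : Type*} [DecidableEq V] (W S : Finset V) :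
    vsum W (fun v => if v ∈ S then (1 : ℝ) else 0) = (W ∩ S).card := by
  simp [vsum, Finset.sum_ite_mem]

lemma card_inter_le_one {V : Type*} [DecidableEq V] {H : SimpleGraph V} {W S : Finset V}
    (hW : H.IsClique (W : Set V)) (hS : IsStable H S) : (W ∩ S).card ≤ 1 := by
  by_contra h
  push_neg at h
  obtain ⟨a, ha, b, hb, hab⟩ := Finset.one_lt_card.mp h
  simp only [Finset.mem_inter] at ha hb
  exact hS a ha.2 b hb.2 (hW ha.1 hb.1 hab)

lemma key_step {V : Type*} [DecidableEq V] (H : SimpleGraph V) (W : Finset V)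
    (hW : H.IsClique (W : Set V)) {x : V → ℝ} (hx : x ∈ STAB H) (h1 : vsum W x = 1) :
    x ∈ STAB (cliqueProj H W) := by
  rw [STAB, _root_.convexHull_eq] at hx
  obtain ⟨ι, t, w, z, hw0, hwsum, hz, hcm⟩ := hx
  have hxz : x = ∑ i ∈ t, w i • z i := by
    rw [← hcm, Finset.centerMass_eq_of_sum_1 _ _ hwsum]
  -- each z i is a characteristic vector
  have hzs : ∀ i ∈ t, ∃ S : Finset V, IsStable H S ∧
      z i = fun v => if v ∈ S then (1 : ℝ) else 0 := fun i hi => hz i hi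
  have hvsum : ∑ i ∈ t, w i * vsum W (z i) = 1 := by
    rw [← h1, hxz]
    simp only [vsum, Finset.sum_apply, Pi.smul_apply, smul_eq_mul, Finset.mul_sum]
    exact Finset.sum_comm
  have hle : ∀ i ∈ t, vsum W (z i) ≤ 1 := by
    intro i hi
    obtain ⟨S, hSst, hz⟩ := hzs i hi
    rw [hz, vsum_char]
    exact_mod_cast card_inter_le_one hW hSst
  have hzero : ∀ i ∈ t, w i * (1 - vsum W (z i)) = 0 := by
    have hsum0 : ∑ i ∈ t, w i * (1 - vsum W (z i)) = 0 := by
      simp only [mul_sub, mul_one, Finset.sum_sub_distrib, hwsum, hvsum, sub_self]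
    intro i hi
    refine (Finset.sum_eq_zero_iff_of_nonneg ?_).mp hsum0 i hi
    intro j hj
    exact mul_nonneg (hw0 j hj) (by linarith [hle j hj])
  rw [STAB, _root_.convexHull_eq]
  refine ⟨ι, t.filter (fun i => w i ≠ 0), w, z, fun i hi => hw0 i (Finset.mem_filter.mp hi).1,
    by rw [Finset.sum_filter_ne_zero]; exact hwsum, ?_, by
      rw [Finset.centerMass_filter_ne_zero]; exact hcm⟩
  intro i hi
  obtain ⟨hit, hwne⟩ := Finset.mem_filter.mp hi
  obtain ⟨S, hSst, hzi⟩ := hzs i hit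
  have ha : vsum W (z i) = 1 := by
    rcases mul_eq_zero.mp (hzero i hit) with h | h
    · exact absurd h hwne
    · linarith
  rw [hzi, vsum_char] at ha
  have hcard : (W ∩ S).card = 1 := by exact_mod_cast ha
  obtain ⟨a, haa⟩ := Finset.card_eq_one.mp hcard
  have haW : a ∈ W ∩ S := haa ▸ Finset.mem_singleton_self a
  refine ⟨S, stable_cliqueProj hSst ⟨a, (Finset.mem_inter.mp haW).1,
    (Finset.mem_inter.mp haW).2⟩, hzi⟩

/-- `F_t ⊆ STAB(G_t)` for every `t ∈ {0,…,r}`. -/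
theorem stmt6 {V : Type*} [Fintype V] [DecidableEq V] (G : SimpleGraph V)
    (r : ℕ) (W : ℕ → Finset V)
    (hclique : ∀ t ∈ Finset.Icc 1 r, (projSeq G W (t - 1)).IsClique (W t : Set V)) :
    ∀ t ≤ r, Fface G W t ⊆ STAB (projSeq G W t) := by
  intro t
  induction t with
  | zero =>
    intro _ x hx
    exact hx.1
  | succ n ih =>
    intro hn x hx
    obtain ⟨hxS, hxW⟩ := hx
    have hx' : x ∈ Fface G W n := by
      refine ⟨hxS, fun j hj => hxW j ?_⟩
      rw [Finset.mem_Icc] at hj ⊢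
      exact ⟨hj.1, hj.2.trans (Nat.le_succ n)⟩
    have hstab : x ∈ STAB (projSeq G W n) := ih (Nat.le_of_succ_le hn) hx'
    have hWcl : (projSeq G W n).IsClique (W (n + 1) : Set V) := by
      have := hclique (n + 1) (Finset.mem_Icc.mpr ⟨Nat.succ_le_succ (Nat.zero_le n), hn⟩)
      simpa using this
    have h1 : vsum (W (n + 1)) x = 1 :=
      hxW (n + 1) (Finset.mem_Icc.mpr ⟨Nat.succ_le_succ (Nat.zero_le n), le_refl _⟩)
    exact key_step (projSeq G W n) (W (n + 1)) hWcl hstab h1
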